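/- Let BWT have runs with head positions I[0] < I[1] < … < I[r−1] (I[0] = 0) and set I[r] = n. For a position j = I[k] + t with 0 ≤ t < I[k+1] − I[k] (so j is in run k), LF(j) = LF(I[k]) + t. -/
import Mathlib


def finPred {n : ℕ} (i : Fin n) : Fin n :=
  ⟨i.val - 1, Nat.lt_of_le_of_lt (Nat.sub_le _ _) i.isLt⟩

/-- C(c) = number of positions j with BWT[j] < c. -/
def Ccount {n : ℕ} {α : Type*} [LinearOrder α] (B : Fin n → α) (c : α) : ℕ :=
  (Finset.univ.filter (fun j => B j < c)).card

/-- rank_c(B, i) = number of positions j < i with B[j] = c. -/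
def rank {n : ℕ} {α : Type*} [LinearOrder α] (B : Fin n → α) (c : α) (i : Fin n) : ℕ :=
  (Finset.univ.filter (fun j => j < i ∧ B j = c)).card

/-- LF(i) = C(BWT[i]) + rank_{BWT[i]}(BWT, i). -/
def LF {n : ℕ} {α : Type*} [LinearOrder α] (B : Fin n → α) (i : Fin n) : ℕ :=
  Ccount B (B i) + rank B (B i) i

/-- Run heads: positions i with i = 0 or B[i] ≠ B[i−1]. -/
def runHeads {n : ℕ} {α : Type*} [LinearOrder α] (B : Fin n → α) : Finset (Fin n) :=
  Finset.univ.filter (fun i => i.val = 0 ∨ B i ≠ B (finPred i))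

/-- If p is the run head of the run containing j (the largest run head ≤ j),
then LF(j) = LF(p) + (j − p). -/
theorem stmt10 {n : ℕ} {α : Type*} [LinearOrder α] (B : Fin n → α) (j p : Fin n)
    (hp : p ∈ runHeads B) (hpj : p ≤ j)
    (hmax : ∀ q ∈ runHeads B, q ≤ j → q ≤ p) :
    LF B j = LF B p + (j.val - p.val) := by
  -- all positions in [p, j] have the same character as p
  have hsame : ∀ i : Fin n, p ≤ i → i ≤ j → B i = B p := by
    have key : ∀ v : ℕ, ∀ i : Fin n, i.val = v → p ≤ i → i ≤ j → B i = B p := by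
      intro v
      induction v using Nat.strong_induction_on with
      | _ v IH =>
      intro i hv hpi hij
      rcases eq_or_lt_of_le hpi with h | h
      · rw [← h]
      · -- i is not a run head
        have hnr : i ∉ runHeads B := by
          intro hmem
          exact absurd (hmax i hmem hij) (not_le_of_gt h)
        simp only [runHeads, Finset.mem_filter, Finset.mem_univ, true_and,
          not_or, not_ne_iff] at hnr
        have hpos : 0 < i.val := lt_of_le_of_lt (Nat.zero_le _) h
        have hlt : (finPred i).val < i.val := by
          simp only [finPred]; omega
        have hp1 : p ≤ finPred i := by
          have : p.val ≤ i.val - 1 := by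
            have := (Fin.lt_def).mp h; omega
          exact this
        have hj1 : finPred i ≤ j := le_trans (le_of_lt hlt) hij
        rw [hnr.2]
        exact IH (finPred i).val (hv ▸ hlt) (finPred i) rfl hp1 hj1
    exact fun i => key i.val i rfl
  have hBj : B j = B p := hsame j hpj le_rfl
  -- rank split
  have hrank : rank B (B p) j = rank B (B p) p + (j.val - p.val) := by
    unfold rank
    have hsplit : (Finset.univ.filter (fun k => k < j ∧ B k = B p))
        = (Finset.univ.filter (fun k => k < p ∧ B k = B p)) ∪ Finset.Ico p j := by
      ext k
      simp only [Finset.mem_filter, Finset.mem_univ, true_and, Finset.mem_union,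
        Finset.mem_Ico]
      constructor
      · rintro ⟨hkj, hBk⟩
        rcases lt_or_ge k p with h | h
        · exact Or.inl ⟨h, hBk⟩
        · exact Or.inr ⟨h, hkj⟩
      · rintro (⟨hkp, hBk⟩ | ⟨hpk, hkj⟩)
        · exact ⟨lt_of_lt_of_le hkp hpj, hBk⟩
        · exact ⟨hkj, hsame k hpk (le_of_lt hkj)⟩
    rw [hsplit, Finset.card_union_of_disjoint]
    · congr 1
      exact Fin.card_Ico p j
    · rw [Finset.disjoint_left]
      intro k hk hk2
      simp only [Finset.mem_filter, Finset.mem_univ, true_and] at hk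
      simp only [Finset.mem_Ico] at hk2
      exact absurd hk.1 (not_lt_of_ge hk2.1)
  unfold LF
  rw [hBj, hrank]
  ring
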